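/- Let G be a group with two finite presentations G = ⟨S|R⟩ and G = ⟨S′|R′⟩, i.e. S and S′ are finite symmetric generating sets of G, and R ⊆ F_S and R′ ⊆ F_{S′} are finite sets of relators whose normal closures equal the kernels of the respective evaluation homomorphisms μ : F_S → G and μ′ : F_{S′} → G. If G satisfies the radial isoperimetric inequality of degree p ≥ 1 with respect to ⟨S|R⟩ (with some constant C > 0), then G satisfies the radial isoperimetric inequality of degree p with respect to ⟨S′|R′⟩ (with some constant C′ > 0). -/

import Mathlib

open scoped Pointwise

/-- The product in `G` of a word over the subset `S ⊆ G`. -/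
def wordProd {G : Type*} [Group G] (S : Set G) (w : List S) : G :=
  (w.map (fun s => (s : G))).prod

/-- The word metric `d_S(a,b)`: the least `n` such that `b⁻¹ * a` is a product of
`n` elements of `S`. -/
noncomputable def wordDist {G : Type*} [Group G] (S : Set G) (a b : G) : ℕ :=
  sInf {n | ∃ w : List S, w.length = n ∧ wordProd S w = b⁻¹ * a}

/-- The evaluation homomorphism `μ : F_S → G` from the free group on `S`. -/
noncomputable def muEval {G : Type*} [Group G] (S : Set G) : FreeGroup S →* G :=
  FreeGroup.lift (fun s => (s : G))

/-- A word over `S`, regarded as an element of the free group `F_S`. -/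
def wordToFree {G : Type*} [Group G] (S : Set G) (w : List S) : FreeGroup S :=
  (w.map FreeGroup.of).prod

/-- The combinatorial area of a word `w` over `S` with respect to the relator set
`R ⊆ F_S`: the least `k` such that `w = ∏_{i=1}^k vᵢ rᵢ vᵢ⁻¹` in `F_S` with each
`rᵢ ∈ R` or `rᵢ⁻¹ ∈ R`. -/
noncomputable def area {G : Type*} [Group G] (S : Set G) (R : Set (FreeGroup S))
    (w : List S) : ℕ :=
  sInf {k | ∃ v r : Fin k → FreeGroup S,
    (∀ i, r i ∈ R ∨ (r i)⁻¹ ∈ R) ∧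
    wordToFree S w = (List.ofFn (fun i => v i * r i * (v i)⁻¹)).prod}

section Aux
variable {G : Type*} [Group G] {S : Set G}

@[simp] lemma wordProd_nil : wordProd S ([] : List S) = 1 := rfl

lemma wordProd_cons (s : S) (w : List S) :
    wordProd S (s :: w) = (s : G) * wordProd S w := by simp [wordProd]

lemma wordProd_append (w₁ w₂ : List S) :
    wordProd S (w₁ ++ w₂) = wordProd S w₁ * wordProd S w₂ := by simp [wordProd]

@[simp] lemma wordToFree_nil : wordToFree S ([] : List S) = 1 := rfl

lemma wordToFree_cons (s : S) (w : List S) :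
    wordToFree S (s :: w) = FreeGroup.of s * wordToFree S w := by simp [wordToFree]

lemma wordToFree_append (w₁ w₂ : List S) :
    wordToFree S (w₁ ++ w₂) = wordToFree S w₁ * wordToFree S w₂ := by simp [wordToFree]

lemma muEval_wordToFree (w : List S) :
    muEval S (wordToFree S w) = wordProd S w := by
  induction w with
  | nil => simp [muEval]
  | cons s w ih => rw [wordToFree_cons, map_mul, ih, wordProd_cons, muEval, FreeGroup.lift_apply_of]

def sInv (hS : S⁻¹ = S) (s : S) : S :=
  ⟨(s : G)⁻¹, Set.mem_inv.mp (by rw [hS]; exact s.2)⟩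

def invWord (hS : S⁻¹ = S) (w : List S) : List S := (w.map (sInv hS)).reverse

@[simp] lemma invWord_length (hS : S⁻¹ = S) (w : List S) :
    (invWord hS w).length = w.length := by simp [invWord]

lemma wordProd_invWord (hS : S⁻¹ = S) (w : List S) :
    wordProd S (invWord hS w) = (wordProd S w)⁻¹ := by
  induction w with
  | nil => simp [invWord]
  | cons s w ih =>
    have h : invWord hS (s :: w) = invWord hS w ++ [sInv hS s] := by simp [invWord]
    rw [h, wordProd_append, ih, wordProd_cons (sInv hS s) [], wordProd_cons s w, mul_inv_rev]
    simp [sInv]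

lemma exists_wordProd_eq (hS : S⁻¹ = S) (hgen : Subgroup.closure S = ⊤) (g : G) :
    ∃ w : List S, wordProd S w = g := by
  have hg : g ∈ Subgroup.closure S := by rw [hgen]; trivial
  induction hg using Subgroup.closure_induction with
  | mem x hx => exact ⟨[⟨x, hx⟩], by simp [wordProd]⟩
  | one => exact ⟨[], rfl⟩
  | mul x y hx hy ihx ihy =>
    obtain ⟨w₁, h₁⟩ := ihx; obtain ⟨w₂, h₂⟩ := ihy
    exact ⟨w₁ ++ w₂, by rw [wordProd_append, h₁, h₂]⟩
  | inv x hx ih =>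
    obtain ⟨w, h⟩ := ih
    exact ⟨invWord hS w, by rw [wordProd_invWord, h]⟩

lemma wordDist_one_eq (g : G) :
    wordDist S g 1 = sInf {n | ∃ w : List S, w.length = n ∧ wordProd S w = g} := by
  simp [wordDist]

lemma wordDist_le_length (g : G) (w : List S) (h : wordProd S w = g) :
    wordDist S g 1 ≤ w.length := by
  rw [wordDist_one_eq]; exact Nat.sInf_le ⟨w, rfl, h⟩

lemma exists_word_of_wordDist (hS : S⁻¹ = S) (hgen : Subgroup.closure S = ⊤) (g : G) :
    ∃ w : List S, w.length = wordDist S g 1 ∧ wordProd S w = g := by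
  have hne : {n | ∃ w : List S, w.length = n ∧ wordProd S w = g}.Nonempty := by
    obtain ⟨w, hw⟩ := exists_wordProd_eq hS hgen g
    exact ⟨w.length, w, rfl, hw⟩
  rw [wordDist_one_eq]; exact Nat.sInf_mem hne

lemma wordDist_mul_le (hS : S⁻¹ = S) (hgen : Subgroup.closure S = ⊤) (g : G) (v : List S) :
    wordDist S (g * wordProd S v) 1 ≤ wordDist S g 1 + v.length := by
  obtain ⟨u, hlen, hu⟩ := exists_word_of_wordDist hS hgen g
  have := wordDist_le_length (g * wordProd S v) (u ++ v) (by rw [wordProd_append, hu])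
  simpa [hlen] using this

lemma wordProd_flatMap {S' : Set G} (α : S' → List S) (hα : ∀ s', wordProd S (α s') = s')
    (u : List S') : wordProd S (u.flatMap α) = wordProd S' u := by
  induction u with
  | nil => simp
  | cons s u ih => rw [List.flatMap_cons, wordProd_append, ih, hα, wordProd_cons]

lemma length_flatMap_le {S' : Set G} (α : S' → List S) {M : ℕ}
    (hM : ∀ s', (α s').length ≤ M) (u : List S') :
    (u.flatMap α).length ≤ M * u.length := by
  induction u with
  | nil => simp
  | cons s u ih =>
    rw [List.flatMap_cons, List.length_append, List.length_cons, Nat.mul_succ]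
    have := hM s; omega

lemma wordDist_le_of_rep {S' : Set G} (α : S' → List S) (hα : ∀ s', wordProd S (α s') = s')
    (hS' : S'⁻¹ = S') (hgen' : Subgroup.closure S' = ⊤) {M : ℕ}
    (hM : ∀ s', (α s').length ≤ M) (g : G) :
    wordDist S g 1 ≤ M * wordDist S' g 1 := by
  obtain ⟨u, hlen, hu⟩ := exists_word_of_wordDist hS' hgen' g
  have h1 : wordProd S (u.flatMap α) = g := by rw [wordProd_flatMap α hα, hu]
  exact (wordDist_le_length g _ h1).trans (by rw [← hlen]; exact length_flatMap_le α hM u)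

lemma wordToFree_flatMap {S' : Set G} (α : S' → List S) (u : List S') :
    FreeGroup.lift (fun s' => wordToFree S (α s')) (wordToFree S' u)
      = wordToFree S (u.flatMap α) := by
  induction u with
  | nil => simp
  | cons s u ih =>
    rw [wordToFree_cons, map_mul, ih, List.flatMap_cons, wordToFree_append, FreeGroup.lift_apply_of]

end Aux


def ConjProd {H : Type*} [Group H] (R : Set H) (g : H) (k : ℕ) : Prop :=
  ∃ l : List H, l.length = k ∧
    (∀ x ∈ l, ∃ v r, (r ∈ R ∨ r⁻¹ ∈ R) ∧ x = v * r * v⁻¹) ∧ g = l.prod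

section ConjProdLemmas
variable {H H' : Type*} [Group H] [Group H'] {R : Set H}

lemma conjProd_one : ConjProd R (1 : H) 0 := ⟨[], rfl, by simp, rfl⟩

lemma conjProd_single {v r : H} (hr : r ∈ R ∨ r⁻¹ ∈ R) : ConjProd R (v * r * v⁻¹) 1 :=
  ⟨[v * r * v⁻¹], rfl,
    fun x hx => by rw [List.mem_singleton] at hx; exact ⟨v, r, hr, hx⟩, by simp⟩

lemma conjProd_mul {g h : H} {k l : ℕ} (hg : ConjProd R g k) (hh : ConjProd R h l) :
    ConjProd R (g * h) (k + l) := by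
  obtain ⟨lg, hlg, hpg, hgp⟩ := hg; obtain ⟨lh, hlh, hph, hhp⟩ := hh
  refine ⟨lg ++ lh, by simp [hlg, hlh], fun x hx => ?_, by rw [List.prod_append, hgp, hhp]⟩
  rcases List.mem_append.1 hx with h | h
  exacts [hpg x h, hph x h]

lemma prod_map_conj (u : H) (l : List H) :
    (l.map (fun x => u * x * u⁻¹)).prod = u * l.prod * u⁻¹ := by
  induction l with
  | nil => simp
  | cons a l ih => simp only [List.map_cons, List.prod_cons, ih]; group

lemma conjProd_conj {g : H} {k : ℕ} (u : H) (hg : ConjProd R g k) :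
    ConjProd R (u * g * u⁻¹) k := by
  obtain ⟨l, hl, hp, rfl⟩ := hg
  refine ⟨l.map (fun x => u * x * u⁻¹), by simp [hl], fun x hx => ?_, (prod_map_conj u l).symm⟩
  rw [List.mem_map] at hx; obtain ⟨y, hy, rfl⟩ := hx
  obtain ⟨v, r, hr, rfl⟩ := hp y hy
  exact ⟨u * v, r, hr, by group⟩

lemma conjProd_inv {g : H} {k : ℕ} (hg : ConjProd R g k) : ConjProd R g⁻¹ k := by
  obtain ⟨l, hl, hp, rfl⟩ := hg
  refine ⟨(l.map (·⁻¹)).reverse, by simp [hl], fun x hx => ?_, ?_⟩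
  · simp only [List.mem_reverse, List.mem_map] at hx
    obtain ⟨y, hy, rfl⟩ := hx
    obtain ⟨v, r, hr, rfl⟩ := hp y hy
    exact ⟨v, r⁻¹, by rw [inv_inv]; exact hr.symm, by group⟩
  · exact List.prod_inv_reverse l

lemma conjProd_listProd {A : ℕ} (l : List H) (h : ∀ x ∈ l, ∃ a ≤ A, ConjProd R x a) :
    ∃ m ≤ A * l.length, ConjProd R l.prod m := by
  induction l with
  | nil => exact ⟨0, by simp, by simpa using conjProd_one⟩
  | cons x l ih =>
    obtain ⟨a, ha, hx⟩ := h x (by simp)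
    obtain ⟨m, hm, hl⟩ := ih (fun y hy => h y (by simp [hy]))
    refine ⟨a + m, by rw [List.length_cons, Nat.mul_succ]; omega, ?_⟩
    rw [List.prod_cons]; exact conjProd_mul hx hl

lemma conjProd_map {R' : Set H'} (f : H →* H') {A : ℕ}
    (hA : ∀ r ∈ R, ∃ a ≤ A, ConjProd R' (f r) a) {g : H} {k : ℕ} (hg : ConjProd R g k) :
    ∃ m ≤ A * k, ConjProd R' (f g) m := by
  obtain ⟨l, hl, hp, rfl⟩ := hg
  have h2 : ∀ x ∈ l.map f, ∃ a ≤ A, ConjProd R' x a := by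
    intro x hx
    rw [List.mem_map] at hx; obtain ⟨y, hy, rfl⟩ := hx
    obtain ⟨v, r, hr, rfl⟩ := hp y hy
    rcases hr with hr | hr
    · obtain ⟨a, ha, hfr⟩ := hA r hr
      exact ⟨a, ha, by simpa [map_mul, map_inv] using conjProd_conj (f v) hfr⟩
    · obtain ⟨a, ha, hfr⟩ := hA r⁻¹ hr
      have h3 : ConjProd R' (f r) a := by simpa [map_inv] using conjProd_inv hfr
      exact ⟨a, ha, by simpa [map_mul, map_inv] using conjProd_conj (f v) h3⟩
  obtain ⟨m, hm, hc⟩ := conjProd_listProd (l.map f) h2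
  refine ⟨m, by simpa [hl] using hm, ?_⟩
  rw [map_list_prod]; exact hc

lemma exists_conjProd_of_mem_normalClosure {g : H} (hg : g ∈ Subgroup.normalClosure R) :
    ∃ k, ConjProd R g k := by
  have hg' : g ∈ Subgroup.closure (Group.conjugatesOfSet R) := hg
  clear hg
  induction hg' using Subgroup.closure_induction with
  | mem x hx =>
    rw [Group.mem_conjugatesOfSet_iff] at hx
    obtain ⟨r, hr, hconj⟩ := hx
    obtain ⟨c, hc⟩ := isConj_iff.1 hconj
    exact ⟨1, hc ▸ conjProd_single (Or.inl hr)⟩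
  | one => exact ⟨0, conjProd_one⟩
  | mul x y _ _ ihx ihy =>
    obtain ⟨k, hk⟩ := ihx; obtain ⟨l, hl⟩ := ihy
    exact ⟨k + l, conjProd_mul hk hl⟩
  | inv x _ ih => obtain ⟨k, hk⟩ := ih; exact ⟨k, conjProd_inv hk⟩

end ConjProdLemmas

section AreaLemmas
variable {G : Type*} [Group G] {S : Set G}

lemma area_eq_sInf (R : Set (FreeGroup S)) (w : List S) :
    area S R w = sInf {k | ConjProd R (wordToFree S w) k} := by
  unfold area
  congr 1
  ext k
  constructor
  · rintro ⟨v, r, hr, hw⟩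
    refine ⟨List.ofFn (fun i => v i * r i * (v i)⁻¹), by simp, fun x hx => ?_, hw⟩
    rw [List.mem_ofFn] at hx; obtain ⟨i, rfl⟩ := hx
    exact ⟨v i, r i, hr i, rfl⟩
  · rintro ⟨l, hl, hp, hw⟩
    subst hl
    choose v r hr hx using fun i : Fin l.length => hp (l.get i) (l.get_mem i)
    refine ⟨v, r, hr, ?_⟩
    have h2 : l = List.ofFn (fun i => v i * r i * (v i)⁻¹) := by
      conv_lhs => rw [← List.ofFn_get l]
      exact congrArg List.ofFn (funext hx)
    rw [hw]; exact congrArg List.prod h2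

lemma area_le_of_conjProd {R : Set (FreeGroup S)} {w : List S} {k : ℕ}
    (h : ConjProd R (wordToFree S w) k) : area S R w ≤ k := by
  rw [area_eq_sInf]; exact Nat.sInf_le h

lemma conjProd_area {R : Set (FreeGroup S)} {w : List S}
    (h : ∃ k, ConjProd R (wordToFree S w) k) :
    ConjProd R (wordToFree S w) (area S R w) := by
  rw [area_eq_sInf]; exact Nat.sInf_mem h

lemma conjProd_word_mul_inv {R : Set (FreeGroup S)}
    (θ : FreeGroup S →* FreeGroup S) {B : ℕ}
    (hB : ∀ s : S, ∃ b ≤ B, ConjProd R (FreeGroup.of s * (θ (FreeGroup.of s))⁻¹) b)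
    (u : List S) :
    ∃ m ≤ B * u.length, ConjProd R (wordToFree S u * (θ (wordToFree S u))⁻¹) m := by
  induction u with
  | nil =>
    refine ⟨0, by simp, ?_⟩
    have h : wordToFree S ([] : List S) * (θ (wordToFree S ([] : List S)))⁻¹ = 1 := by simp
    rw [h]; exact conjProd_one
  | cons s u ih =>
    obtain ⟨b, hb, hs⟩ := hB s
    obtain ⟨m, hm, hu⟩ := ih
    refine ⟨m + b, by rw [List.length_cons, Nat.mul_succ]; omega, ?_⟩
    have key : wordToFree S (s :: u) * (θ (wordToFree S (s :: u)))⁻¹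
        = (FreeGroup.of s * (wordToFree S u * (θ (wordToFree S u))⁻¹) * (FreeGroup.of s)⁻¹)
          * (FreeGroup.of s * (θ (FreeGroup.of s))⁻¹) := by
      rw [wordToFree_cons, map_mul, mul_inv_rev]; group
    rw [key]
    exact conjProd_mul (conjProd_conj _ hu) hs

end AreaLemmas

section SumLemma
variable {G : Type*} [Group G] {S S' : Set G}

lemma pow_term_le {q M : ℕ} (hM1 : 1 ≤ M) {d d' : ℕ} (hd : d ≤ M * d' + M) :
    ((d : ℝ) + 1) ^ q ≤ (2 * M : ℝ) ^ q * ((d' : ℝ) + 1) ^ q := by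
  rw [← mul_pow]
  apply pow_le_pow_left₀ (by positivity)
  have h1 : (d : ℝ) ≤ (M : ℝ) * (d' : ℝ) + M := by exact_mod_cast hd
  have h2 : (1 : ℝ) ≤ M := by exact_mod_cast hM1
  nlinarith [mul_nonneg (by linarith : (0:ℝ) ≤ (M:ℝ)) (Nat.cast_nonneg d')]

lemma sum_flatMap_le (hS : S⁻¹ = S) (hgen : Subgroup.closure S = ⊤)
    (hS' : S'⁻¹ = S') (hgen' : Subgroup.closure S' = ⊤)
    (α : S' → List S) (hα : ∀ s', wordProd S (α s') = s')
    {M : ℕ} (hM1 : 1 ≤ M) (hM : ∀ s', (α s').length ≤ M) (q : ℕ)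
    (u : List S') : ∀ g : G,
      ∑ j ∈ Finset.range (u.flatMap α).length,
        ((wordDist S (g * wordProd S ((u.flatMap α).take (j + 1))) 1 : ℝ) + 1) ^ q
      ≤ ((M : ℝ) * (2 * M : ℝ) ^ q) * ∑ i ∈ Finset.range u.length,
        ((wordDist S' (g * wordProd S' (u.take (i + 1))) 1 : ℝ) + 1) ^ q := by
  induction u with
  | nil => intro g; simp
  | cons s u ih =>
    intro g
    have hflat : ((s :: u).flatMap α) = α s ++ u.flatMap α := by simp
    rw [hflat, List.length_append, Finset.sum_range_add]
    -- second sum rewrite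
    have h2 : ∑ j ∈ Finset.range (u.flatMap α).length,
        ((wordDist S (g * wordProd S ((α s ++ u.flatMap α).take ((α s).length + j + 1))) 1 : ℝ) + 1) ^ q
        = ∑ j ∈ Finset.range (u.flatMap α).length,
        ((wordDist S ((g * (s : G)) * wordProd S ((u.flatMap α).take (j + 1))) 1 : ℝ) + 1) ^ q := by
      refine Finset.sum_congr rfl fun j _ => ?_
      have e2 : (α s ++ u.flatMap α).take ((α s).length + j + 1)
          = α s ++ (u.flatMap α).take (j + 1) := by
        rw [add_assoc]
        rw [List.take_append]; simp
      rw [e2, wordProd_append, hα, ← mul_assoc]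
    -- first sum bound
    have h1 : ∀ j ∈ Finset.range (α s).length,
        ((wordDist S (g * wordProd S ((α s ++ u.flatMap α).take (j + 1))) 1 : ℝ) + 1) ^ q
        ≤ (2 * M : ℝ) ^ q * ((wordDist S' (g * (s : G)) 1 : ℝ) + 1) ^ q := by
      intro j hj
      rw [Finset.mem_range] at hj
      have htake : (α s ++ u.flatMap α).take (j + 1) = (α s).take (j + 1) :=
        List.take_append_of_le_length (by omega)
      rw [htake]
      have hts : wordProd S ((α s).take (j + 1)) * wordProd S ((α s).drop (j + 1)) = (s : G) := by
        rw [← wordProd_append, List.take_append_drop, hα]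
      have hgp : g * wordProd S ((α s).take (j + 1))
          = (g * (s : G)) * wordProd S (invWord hS ((α s).drop (j + 1))) := by
        rw [wordProd_invWord, eq_mul_inv_of_mul_eq hts]; group
      have hd : wordDist S (g * wordProd S ((α s).take (j + 1))) 1
          ≤ M * wordDist S' (g * (s : G)) 1 + M := by
        rw [hgp]
        refine (wordDist_mul_le hS hgen _ _).trans ?_
        have hlen : (invWord hS ((α s).drop (j + 1))).length ≤ M := by
          rw [invWord_length, List.length_drop]
          have := hM s; omega
        have hcross := wordDist_le_of_rep α hα hS' hgen' hM (g * (s : G))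
        omega
      exact pow_term_le hM1 hd
    -- put together
    have hfirst : ∑ j ∈ Finset.range (α s).length,
        ((wordDist S (g * wordProd S ((α s ++ u.flatMap α).take (j + 1))) 1 : ℝ) + 1) ^ q
        ≤ ((M : ℝ) * (2 * M : ℝ) ^ q) * ((wordDist S' (g * (s : G)) 1 : ℝ) + 1) ^ q := by
      refine (Finset.sum_le_card_nsmul _ _ _ h1).trans ?_
      rw [Finset.card_range, nsmul_eq_mul]
      have hla : ((α s).length : ℝ) ≤ (M : ℝ) := by exact_mod_cast hM s
      have hnn : (0:ℝ) ≤ (2 * M : ℝ) ^ q * ((wordDist S' (g * (s : G)) 1 : ℝ) + 1) ^ q := by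
        positivity
      calc ((α s).length : ℝ) * ((2 * M : ℝ) ^ q * ((wordDist S' (g * (s : G)) 1 : ℝ) + 1) ^ q)
          ≤ (M : ℝ) * ((2 * M : ℝ) ^ q * ((wordDist S' (g * (s : G)) 1 : ℝ) + 1) ^ q) :=
            mul_le_mul_of_nonneg_right hla hnn
        _ = ((M : ℝ) * (2 * M : ℝ) ^ q) * ((wordDist S' (g * (s : G)) 1 : ℝ) + 1) ^ q := by ring
    have hsecond := ih (g * (s : G))
    -- rhs rewrite
    have hrhs : ∑ i ∈ Finset.range (s :: u).length,
        ((wordDist S' (g * wordProd S' ((s :: u).take (i + 1))) 1 : ℝ) + 1) ^ q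
        = (∑ i ∈ Finset.range u.length,
            ((wordDist S' ((g * (s : G)) * wordProd S' (u.take (i + 1))) 1 : ℝ) + 1) ^ q)
          + ((wordDist S' (g * (s : G)) 1 : ℝ) + 1) ^ q := by
      rw [List.length_cons, Finset.sum_range_succ']
      congr 1
      · refine Finset.sum_congr rfl fun i _ => ?_
        rw [List.take_succ_cons, wordProd_cons, ← mul_assoc]
      · rw [List.take_succ_cons, List.take_zero, wordProd_cons, wordProd_nil, mul_one]
    rw [hrhs, h2]
    calc (∑ j ∈ Finset.range (α s).length,
        ((wordDist S (g * wordProd S ((α s ++ u.flatMap α).take (j + 1))) 1 : ℝ) + 1) ^ q)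
        + ∑ j ∈ Finset.range (u.flatMap α).length,
            ((wordDist S ((g * (s : G)) * wordProd S ((u.flatMap α).take (j + 1))) 1 : ℝ) + 1) ^ q
        ≤ ((M : ℝ) * (2 * M : ℝ) ^ q) * ((wordDist S' (g * (s : G)) 1 : ℝ) + 1) ^ q
          + ((M : ℝ) * (2 * M : ℝ) ^ q) * ∑ i ∈ Finset.range u.length,
            ((wordDist S' ((g * (s : G)) * wordProd S' (u.take (i + 1))) 1 : ℝ) + 1) ^ q :=
          add_le_add hfirst hsecond
      _ = ((M : ℝ) * (2 * M : ℝ) ^ q) * ((∑ i ∈ Finset.range u.length,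
            ((wordDist S' ((g * (s : G)) * wordProd S' (u.take (i + 1))) 1 : ℝ) + 1) ^ q)
          + ((wordDist S' (g * (s : G)) 1 : ℝ) + 1) ^ q) := by ring

end SumLemma


/-- The radial isoperimetric inequality of degree `p` is independent
of the chosen finite presentation. -/
theorem radial_isoperimetric_independent_of_presentation
    {G : Type*} [Group G] (S S' : Set G)
    (hSfin : S.Finite) (hSsymm : S⁻¹ = S) (hSgen : Subgroup.closure S = ⊤)
    (hS'fin : S'.Finite) (hS'symm : S'⁻¹ = S') (hS'gen : Subgroup.closure S' = ⊤)
    (R : Set (FreeGroup S)) (hRfin : R.Finite)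
    (hRker : Subgroup.normalClosure R = (muEval S).ker)
    (R' : Set (FreeGroup S')) (hR'fin : R'.Finite)
    (hR'ker : Subgroup.normalClosure R' = (muEval S').ker)
    (p : ℕ) (hp : 1 ≤ p)
    -- `G` satisfies the radial isoperimetric inequality of degree `p` w.r.t. `⟨S|R⟩`
    (hRIP : ∃ C : ℝ, 0 < C ∧ ∀ w : List S, wordProd S w = 1 →
      (area S R w : ℝ) ≤ C * ∑ i ∈ Finset.range w.length,
        ((wordDist S (wordProd S (w.take (i + 1))) 1 : ℝ) + 1) ^ (p - 1)) :
    -- then it satisfies it w.r.t. `⟨S'|R'⟩`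
    ∃ C' : ℝ, 0 < C' ∧ ∀ w : List S', wordProd S' w = 1 →
      (area S' R' w : ℝ) ≤ C' * ∑ i ∈ Finset.range w.length,
        ((wordDist S' (wordProd S' (w.take (i + 1))) 1 : ℝ) + 1) ^ (p - 1) := by
  obtain ⟨C, hC, hC2⟩ := hRIP
  set q := p - 1 with hq
  -- choose representative words
  choose α hα using fun s' : S' => exists_wordProd_eq hSsymm hSgen (s' : G)
  choose β hβ using fun s : S => exists_wordProd_eq hS'symm hS'gen (s : G)
  haveI : Finite S' := hS'fin.to_subtype
  haveI : Finite R := hRfin.to_subtype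
  obtain ⟨M₀, hM₀⟩ := Finite.exists_le (fun s' : S' => (α s').length)
  set M := M₀ + 1 with hMdef
  have hM1 : 1 ≤ M := by omega
  have hM : ∀ s', (α s').length ≤ M := fun s' => (hM₀ s').trans (by omega)
  -- the two substitution homomorphisms
  set φ : FreeGroup S' →* FreeGroup S := FreeGroup.lift (fun s' => wordToFree S (α s')) with hφ
  set ψ : FreeGroup S →* FreeGroup S' := FreeGroup.lift (fun s => wordToFree S' (β s)) with hψ
  have hmuφ : ∀ x, muEval S (φ x) = muEval S' x := by
    intro x
    have : (muEval S).comp φ = muEval S' := by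
      refine FreeGroup.ext_hom _ _ fun s' => ?_
      rw [MonoidHom.comp_apply, hφ, FreeGroup.lift_apply_of, muEval_wordToFree, hα]
      rw [muEval, FreeGroup.lift_apply_of]
    exact DFunLike.congr_fun this x
  have hmuψ : ∀ x, muEval S' (ψ x) = muEval S x := by
    intro x
    have : (muEval S').comp ψ = muEval S := by
      refine FreeGroup.ext_hom _ _ fun s => ?_
      rw [MonoidHom.comp_apply, hψ, FreeGroup.lift_apply_of, muEval_wordToFree, hβ]
      rw [muEval, FreeGroup.lift_apply_of]
    exact DFunLike.congr_fun this x
  -- constant A : area over R' of ψ of each relator of R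
  have hψR : ∀ r : R, ∃ k, ConjProd R' (ψ (r : FreeGroup S)) k := by
    intro r
    apply exists_conjProd_of_mem_normalClosure
    rw [hR'ker, MonoidHom.mem_ker, hmuψ]
    have : (r : FreeGroup S) ∈ Subgroup.normalClosure R :=
      Subgroup.subset_normalClosure r.2
    rw [hRker, MonoidHom.mem_ker] at this
    exact this
  choose a ha using hψR
  obtain ⟨A, hAbd⟩ := Finite.exists_le a
  have hA : ∀ r ∈ R, ∃ k ≤ A, ConjProd R' (ψ r) k :=
    fun r hr => ⟨a ⟨r, hr⟩, hAbd ⟨r, hr⟩, ha ⟨r, hr⟩⟩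
  -- constant B
  set θ : FreeGroup S' →* FreeGroup S' := ψ.comp φ with hθ
  have hθker : ∀ s' : S', FreeGroup.of s' * (θ (FreeGroup.of s'))⁻¹ ∈ (muEval S').ker := by
    intro s'
    rw [MonoidHom.mem_ker, map_mul, map_inv, hθ, MonoidHom.comp_apply, hmuψ, hmuφ]
    simp
  have hθB : ∀ s' : S', ∃ k, ConjProd R' (FreeGroup.of s' * (θ (FreeGroup.of s'))⁻¹) k := by
    intro s'
    apply exists_conjProd_of_mem_normalClosure
    rw [hR'ker]; exact hθker s'
  choose b hb using hθB
  obtain ⟨B, hBbd⟩ := Finite.exists_le b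
  have hB : ∀ s' : S', ∃ k ≤ B, ConjProd R' (FreeGroup.of s' * (θ (FreeGroup.of s'))⁻¹) k :=
    fun s' => ⟨b s', hBbd s', hb s'⟩
  -- the constant
  set K : ℝ := (M : ℝ) * (2 * M : ℝ) ^ q with hK
  have hKpos : 0 < K := by
    rw [hK]; positivity
  refine ⟨(B : ℝ) + (A : ℝ) * C * K + 1, by positivity, ?_⟩
  intro w' hw'
  set w : List S := w'.flatMap α with hwdef
  have hw1 : wordProd S w = 1 := by rw [hwdef, wordProd_flatMap α hα, hw']
  -- area of w over R
  have hwmem : ∃ k, ConjProd R (wordToFree S w) k := by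
    apply exists_conjProd_of_mem_normalClosure
    rw [hRker, MonoidHom.mem_ker, muEval_wordToFree, hw1]
  have hkP : ConjProd R (wordToFree S w) (area S R w) := conjProd_area hwmem
  -- transfer
  have hφw : φ (wordToFree S' w') = wordToFree S w := wordToFree_flatMap α w'
  obtain ⟨m₂, hm₂, hc₂⟩ := conjProd_map ψ hA hkP
  obtain ⟨m₁, hm₁, hc₁⟩ := conjProd_word_mul_inv θ hB w'
  have hdecomp : wordToFree S' w'
      = (wordToFree S' w' * (θ (wordToFree S' w'))⁻¹) * (ψ (wordToFree S w)) := by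
    rw [← hφw, hθ, MonoidHom.comp_apply, inv_mul_cancel_right]
  have harea : area S' R' w' ≤ m₁ + m₂ := by
    apply area_le_of_conjProd
    rw [hdecomp]
    exact conjProd_mul hc₁ hc₂
  -- sums
  set SS : ℝ := ∑ i ∈ Finset.range w'.length,
      ((wordDist S' (wordProd S' (w'.take (i + 1))) 1 : ℝ) + 1) ^ q with hSS
  have hSSnonneg : 0 ≤ SS := by
    rw [hSS]; exact Finset.sum_nonneg fun i _ => by positivity
  have hn : (w'.length : ℝ) ≤ SS := by
    rw [hSS]
    calc (w'.length : ℝ) = ∑ _i ∈ Finset.range w'.length, (1 : ℝ) := by simp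
      _ ≤ _ := by
          refine Finset.sum_le_sum fun i _ => ?_
          refine one_le_pow₀ ?_
          have : (0:ℝ) ≤ (wordDist S' (wordProd S' (w'.take (i + 1))) 1 : ℝ) :=
            Nat.cast_nonneg _
          linarith
  have hSigS : ∑ i ∈ Finset.range w.length,
      ((wordDist S (wordProd S (w.take (i + 1))) 1 : ℝ) + 1) ^ q ≤ K * SS := by
    have := sum_flatMap_le hSsymm hSgen hS'symm hS'gen α hα hM1 hM q w' (1 : G)
    simpa only [one_mul, hSS, hK, hwdef] using this
  have hkC : (area S R w : ℝ) ≤ C * (K * SS) :=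
    (hC2 w hw1).trans (mul_le_mul_of_nonneg_left hSigS hC.le)
  -- final chain
  have hcast : (area S' R' w' : ℝ) ≤ (B : ℝ) * (w'.length : ℝ) + (A : ℝ) * (area S R w : ℝ) := by
    have h1 : area S' R' w' ≤ B * w'.length + A * area S R w := by
      calc area S' R' w' ≤ m₁ + m₂ := harea
        _ ≤ B * w'.length + A * area S R w := add_le_add hm₁ hm₂
    exact_mod_cast h1
  calc (area S' R' w' : ℝ)
      ≤ (B : ℝ) * (w'.length : ℝ) + (A : ℝ) * (area S R w : ℝ) := hcast
    _ ≤ (B : ℝ) * SS + (A : ℝ) * (C * (K * SS)) :=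
        add_le_add (mul_le_mul_of_nonneg_left hn (Nat.cast_nonneg B))
          (mul_le_mul_of_nonneg_left hkC (Nat.cast_nonneg A))
    _ = ((B : ℝ) + (A : ℝ) * C * K) * SS := by ring
    _ ≤ ((B : ℝ) + (A : ℝ) * C * K + 1) * SS :=
        mul_le_mul_of_nonneg_right (by linarith) hSSnonneg
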